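/- Let f be a density on [0,b] with CDF F and suppose a bidder's interim allocation q : [0,b] → [0,1] (for n i.i.d. symmetric bidders) satisfies Border's condition: for every measurable S ⊆ [0,b], ∫_S q(t) f(t) dt ≤ (1 − (1 − ∫_S f(t) dt)^n)/n. Then for every bounded measurable virtual value function x : [0,b] → [0, v̄], ∫₀^b q(t) f(t) x(t) dt ≤ ∫₀^{v̄} [1 − (1 − ∫_{\{t : x(t) ≥ v\}} f(t) dt)^n]/n dv. -/

import Mathlib

open Set MeasureTheory

/-- Generalized Border inequality: if the interim allocation `q` satisfies Border's
condition for every measurable set, then for every bounded measurable virtual value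
function `x : [0,b] → [0, v̄]`,
`∫₀^b q f x ≤ ∫₀^{v̄} (1 − (1 − ∫_{x ≥ v} f)^n)/n dv`. -/
theorem generalized_border
    (n : ℕ) (hn : 1 ≤ n) (b vbar : ℝ) (hb : 0 < b) (hvbar : 0 ≤ vbar)
    (f q x : ℝ → ℝ)
    (hf_nonneg : ∀ t ∈ Icc (0:ℝ) b, 0 ≤ f t)
    (hf_int : IntegrableOn f (Icc 0 b))
    (hf_total : (∫ t in Icc (0:ℝ) b, f t) = 1)
    (hq_mem : ∀ t ∈ Icc (0:ℝ) b, q t ∈ Icc (0:ℝ) 1)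
    (hq_meas : Measurable q)
    (hx_meas : Measurable x)
    (hx_mem : ∀ t ∈ Icc (0:ℝ) b, x t ∈ Icc (0:ℝ) vbar)
    (hborder : ∀ S : Set ℝ, MeasurableSet S → S ⊆ Icc 0 b →
      (∫ t in S, q t * f t) ≤ (1 - (1 - ∫ t in S, f t) ^ n) / n) :
    (∫ t in Icc (0:ℝ) b, q t * f t * x t) ≤
      ∫ v in Icc (0:ℝ) vbar,
        (1 - (1 - ∫ t in {t ∈ Icc (0:ℝ) b | v ≤ x t}, f t) ^ n) / n := by
  set μ := volume.restrict (Icc (0:ℝ) b) with hμ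
  set ν := volume.restrict (Icc (0:ℝ) vbar) with hν
  set g : ℝ → ℝ := fun t => q t * f t with hg
  set S : ℝ → Set ℝ := fun v => {t ∈ Icc (0:ℝ) b | v ≤ x t} with hS
  have hSmeas : ∀ v, MeasurableSet (S v) := fun v =>
    measurableSet_Icc.inter (measurableSet_le measurable_const hx_meas)
  have hSsub : ∀ v, S v ⊆ Icc (0:ℝ) b := fun v => sep_subset _ _
  have hmem : ∀ᵐ t ∂μ, t ∈ Icc (0:ℝ) b := ae_restrict_mem measurableSet_Icc
  have hf_aesm : AEStronglyMeasurable f μ := hf_int.1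
  have hg_aesm : AEStronglyMeasurable g μ :=
    (hq_meas.aestronglyMeasurable).mul hf_aesm
  have hg_nonneg : ∀ t ∈ Icc (0:ℝ) b, 0 ≤ g t := fun t ht =>
    mul_nonneg (hq_mem t ht).1 (hf_nonneg t ht)
  have hg_le_f : ∀ t ∈ Icc (0:ℝ) b, g t ≤ f t := by
    intro t ht
    calc g t = q t * f t := rfl
    _ ≤ 1 * f t := mul_le_mul_of_nonneg_right (hq_mem t ht).2 (hf_nonneg t ht)
    _ = f t := one_mul _
  have hg_int : IntegrableOn g (Icc 0 b) := by
    refine hf_int.mono' hg_aesm ?_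
    filter_upwards [hmem] with t ht
    rw [Real.norm_eq_abs, abs_of_nonneg (hg_nonneg t ht)]
    exact hg_le_f t ht
  -- the product function
  set F : ℝ × ℝ → ℝ := fun p => {p : ℝ × ℝ | p.2 ≤ x p.1}.indicator (fun p => g p.1) p
    with hF
  have hsetF : MeasurableSet {p : ℝ × ℝ | p.2 ≤ x p.1} :=
    measurableSet_le measurable_snd (hx_meas.comp measurable_fst)
  have hF_aesm : AEStronglyMeasurable F (μ.prod ν) :=
    (hg_aesm.comp_fst).indicator hsetF
  -- For fixed t, F (t, ·) is the indicator of Iic (x t) of the constant g t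
  have hFt : ∀ t v, F (t, v) = (Iic (x t)).indicator (fun _ => g t) v := by
    intro t v
    simp only [hF, indicator, mem_setOf_eq, mem_Iic]
  have hF_int : Integrable F (μ.prod ν) := by
    rw [integrable_prod_iff hF_aesm]
    constructor
    · refine Filter.Eventually.of_forall fun t => ?_
      have : (fun v => F (t, v)) = (Iic (x t)).indicator (fun _ => g t) := by
        funext v; exact hFt t v
      rw [this]
      exact (integrable_const (g t)).indicator measurableSet_Iic
    · refine (hf_int.mul_const vbar).mono' ?_ ?_
      · exact (hF_aesm.norm).integral_prod_right'
      · filter_upwards [hmem] with t ht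
        have h1 : (∫ v, ‖F (t, v)‖ ∂ν) ≤ ∫ _v, f t ∂ν := by
          refine integral_mono_of_nonneg (Filter.Eventually.of_forall fun v => norm_nonneg _)
            (integrable_const _) (Filter.Eventually.of_forall fun v => ?_)
          show ‖F (t, v)‖ ≤ f t
          rw [hFt t v]
          rcases le_or_gt v (x t) with h | h
          · rw [indicator_of_mem (by simpa using h)]
            rw [Real.norm_eq_abs, abs_of_nonneg (hg_nonneg t ht)]
            exact hg_le_f t ht
          · rw [indicator_of_notMem (by simpa using h)]
            simpa using hf_nonneg t ht
        have h2 : (∫ _v, f t ∂ν) = f t * vbar := by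
          rw [hν, setIntegral_const, Real.volume_real_Icc_of_le (by linarith), smul_eq_mul,
            sub_zero, mul_comm]
        have h3 : (0:ℝ) ≤ ∫ v, ‖F (t, v)‖ ∂ν :=
          integral_nonneg fun v => norm_nonneg _
        rw [Real.norm_eq_abs, abs_of_nonneg h3]
        exact h1.trans_eq h2
  -- Step A: inner integral in v equals g t * x t
  have stepA : (∫ t in Icc (0:ℝ) b, q t * f t * x t)
      = ∫ t, (∫ v, F (t, v) ∂ν) ∂μ := by
    refine setIntegral_congr_ae measurableSet_Icc ?_
    refine Filter.Eventually.of_forall fun t ht => ?_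
    have hx0 := (hx_mem t ht).1
    have hxv := (hx_mem t ht).2
    have : (∫ v, F (t, v) ∂ν) = ∫ v in Icc (0:ℝ) vbar ∩ Iic (x t), g t := by
      rw [hν]
      rw [show (fun v => F (t, v)) = (Iic (x t)).indicator (fun _ => g t) from
        funext fun v => hFt t v]
      exact setIntegral_indicator measurableSet_Iic
    rw [this]
    have hinter : Icc (0:ℝ) vbar ∩ Iic (x t) = Icc (0:ℝ) (x t) := by
      ext v
      simp only [mem_inter_iff, mem_Iic, mem_Icc]
      constructor
      · rintro ⟨⟨h2, _⟩, h1⟩; exact ⟨h2, h1⟩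
      · rintro ⟨h1, h2⟩; exact ⟨⟨h1, h2.trans hxv⟩, h2⟩
    rw [hinter, setIntegral_const, Real.volume_real_Icc_of_le (by linarith), smul_eq_mul,
      sub_zero, mul_comm]
  -- Step B: inner integral in t equals the set integral over S v
  have stepB : ∀ v, (∫ t, F (t, v) ∂μ) = ∫ t in S v, g t := by
    intro v
    have : (fun t => F (t, v)) = {t : ℝ | v ≤ x t}.indicator g := by
      funext t
      simp only [hF, indicator, mem_setOf_eq]
    rw [hμ, this, setIntegral_indicator (measurableSet_le measurable_const hx_meas)]
    congr 1
  -- the CDF-like function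
  set Ff : ℝ → ℝ := fun v => ∫ t in S v, f t with hFf
  have hFf_anti : Antitone Ff := by
    intro v v' hvv'
    refine setIntegral_mono_set (hf_int.mono_set (hSsub v)) ?_ ?_
    · filter_upwards [ae_restrict_mem (hSmeas v)] with t ht
      exact hf_nonneg t (hSsub v ht)
    · exact Filter.Eventually.of_forall fun t ht => ⟨ht.1, hvv'.trans ht.2⟩
  have hFf_nonneg : ∀ v, 0 ≤ Ff v := fun v =>
    setIntegral_nonneg (hSmeas v) fun t ht => hf_nonneg t (hSsub v ht)
  have hFf_le_one : ∀ v, Ff v ≤ 1 := by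
    intro v
    rw [← hf_total]
    refine setIntegral_mono_set hf_int ?_ ?_
    · filter_upwards [hmem] with t ht using hf_nonneg t ht
    · exact Filter.Eventually.of_forall (hSsub v)
  set B : ℝ → ℝ := fun v => (1 - (1 - Ff v) ^ n) / n with hB
  have hB_meas : Measurable B := by
    have : Measurable Ff := hFf_anti.measurable
    fun_prop
  have hB_bounds : ∀ v, 0 ≤ B v ∧ B v ≤ 1 / n := by
    intro v
    have h1 : (0:ℝ) ≤ 1 - Ff v := by linarith [hFf_le_one v]
    have h2 : (1 - Ff v) ≤ 1 := by linarith [hFf_nonneg v]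
    have hpow1 : (0:ℝ) ≤ (1 - Ff v) ^ n := pow_nonneg h1 n
    have hpow2 : (1 - Ff v) ^ n ≤ 1 := pow_le_one₀ h1 h2
    have hn1 : (1:ℝ) ≤ n := by exact_mod_cast hn
    have hnpos : (0:ℝ) < n := by linarith
    constructor
    · exact div_nonneg (by linarith) hnpos.le
    · exact div_le_div₀ (zero_le_one) (by linarith) hnpos le_rfl
  have hB_int : Integrable B ν := by
    refine (integrable_const ((1:ℝ)/n)).mono' hB_meas.aestronglyMeasurable ?_
    refine Filter.Eventually.of_forall fun v => ?_
    rw [Real.norm_eq_abs, abs_of_nonneg (hB_bounds v).1]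
    exact (hB_bounds v).2
  -- put it together
  rw [stepA, integral_integral_swap hF_int]
  have : (∫ v, (∫ t, F (t, v) ∂μ) ∂ν) = ∫ v, (∫ t in S v, g t) ∂ν :=
    integral_congr_ae (Filter.Eventually.of_forall fun v => stepB v)
  rw [this]
  refine integral_mono_of_nonneg ?_ hB_int ?_
  · exact Filter.Eventually.of_forall fun v =>
      setIntegral_nonneg (hSmeas v) fun t ht => hg_nonneg t (hSsub v ht)
  · exact Filter.Eventually.of_forall fun v => hborder (S v) (hSmeas v) (hSsub v)
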